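/- Let G = (D, τ0, τ1, τ2) be a graph-encoded map (ribbon graph) and let A ⊆ D be closed under τ0 and τ2. Then the partial dual G^A is Eulerian (i.e., every orbit of the subgroup generated by {τ1, τ2^A} has cardinality divisible by 4) if and only if there exists o : D → Bool with o(τ1 f) = ¬o(f) for all f ∈ D, o(τ0 f) = o(f) for all f ∈ A, and o(τ2 f) = o(f) for all f ∈ D \ A; equivalently, if and only if A is the union of the set of all d-edges and a set of some t-edges arising from a crossing-total direction of the medial graph G_m. -/

import Mathlib

open Function
namespace EulerPD
set_option linter.unusedSectionVars false
set_option maxHeartbeats 800000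


variable {D : Type*} [Fintype D]

private lemma claim1 (a b : Equiv.Perm D)
    (hai : ∀ f, a (a f) = f) (haf : ∀ f, a f ≠ f)
    (hbi : ∀ f, b (b f) = f) (hbf : ∀ f, b f ≠ f) :
    ∀ (k : ℕ) (x : D), (⇑(a * b))^[k] x ≠ a x := by
  intro k x h
  set c := a * b with hc
  have hcapp : ∀ z, c z = a (b z) := fun z => rfl
  have key : ∀ i, i ≤ k → a ((⇑c)^[i] x) = (⇑c)^[k - i] x := by
    intro i
    induction i with
    | zero => intro _; simpa using h.symm
    | succ i ih =>
      intro hik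
      have hik' : i ≤ k := Nat.le_of_succ_le hik
      have h1 := ih hik'
      -- from h1 : a (c^[i] x) = c^[k-i] x, get c^[i] x = a (c^[k-i] x)
      have h2 : (⇑c)^[i] x = a ((⇑c)^[k - i] x) := by
        rw [← h1, hai]
      -- k - i ≥ 1
      have hki : k - i = (k - (i+1)) + 1 := by omega
      have h3 : (⇑c)^[k - i] x = c ((⇑c)^[k - (i+1)] x) := by
        rw [hki, Function.iterate_succ_apply']
      -- a (c^[i+1] x) = a (c (c^[i] x)) = b (c^[i] x)
      have h4 : a ((⇑c)^[i+1] x) = b ((⇑c)^[i] x) := by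
        rw [Function.iterate_succ_apply', hcapp, hai]
      rw [h4, h2, h3, hcapp, hai, hbi]
  rcases Nat.even_or_odd k with ⟨m, hm⟩ | ⟨m, hm⟩
  · have := key m (by omega)
    have hkm : k - m = m := by omega
    rw [hkm] at this
    exact haf _ this
  · have := key (m+1) (by omega)
    have hkm : k - (m+1) = m := by omega
    rw [hkm] at this
    -- a (c^[m+1] x) = c^[m] x  ⇒  b (c^[m] x) = c^[m] x
    have h5 : (⇑c)^[m+1] x = a ((⇑c)^[m] x) := by rw [← this, hai]
    have h6 : b ((⇑c)^[m] x) = (⇑c)^[m] x := by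
      have h7 : a (c ((⇑c)^[m] x)) = b ((⇑c)^[m] x) := by rw [hcapp, hai]
      rw [← h7]
      have h8 : c ((⇑c)^[m] x) = (⇑c)^[m+1] x := (Function.iterate_succ_apply' (⇑c) m x).symm
      rw [h8, h5, hai]
    exact hbf _ h6



-- c^[n] = id  where n = orderOf c
private lemma iter_order (c : Equiv.Perm D) (x : D) : (⇑c)^[orderOf c] x = x := by
  rw [Equiv.Perm.iterate_eq_pow, pow_orderOf_eq_one]; rfl

private lemma npos (c : Equiv.Perm D) : 0 < orderOf c := orderOf_pos c

-- a (c^[k] y) = c^[k*(n-1)] (a y)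
private lemma a_iter (a b : Equiv.Perm D)
    (hai : ∀ f, a (a f) = f) (hbi : ∀ f, b (b f) = f) :
    ∀ (k : ℕ) (y : D),
      a ((⇑(a*b))^[k] y) = (⇑(a*b))^[k * (orderOf (a*b) - 1)] (a y) := by
  set c := a * b with hc
  set n := orderOf c with hn
  have hcapp : ∀ z, c z = a (b z) := fun z => rfl
  have hac : ∀ z, a (c z) = b z := by intro z; rw [hcapp, hai]
  -- c^[n-1] (a y) = b y
  have hstep : ∀ y : D, a (c y) = (⇑c)^[n - 1] (a y) := by
    intro y
    have h1 : c ((⇑c)^[n-1] (a y)) = a y := by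
      have := iter_order c (a y)
      rw [← Function.iterate_succ_apply' (⇑c) (n-1) (a y)]
      have hn1 : n - 1 + 1 = n := Nat.succ_pred_eq_of_pos (npos c)
      rw [Nat.succ_eq_add_one, hn1]; exact this
    -- so c^[n-1] (a y) = c⁻¹ (a y) ; also c (a (c y)) = a y since c (a (c y)) = a(b(a(c y)))
    have h2 : c (a (c y)) = a y := by
      rw [hcapp (a (c y)), hac, hbi]
    have := h1.trans h2.symm
    exact (c.injective this).symm
  intro k
  induction k with
  | zero => intro y; simp
  | succ k ih =>
    intro y
    have h1 : (⇑c)^[k+1] y = (⇑c)^[k] (c y) := Function.iterate_succ_apply (⇑c) k y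
    rw [h1, ih (c y), hstep y, ← Function.iterate_add_apply]
    congr 1
    ring

private lemma claim1' (a b : Equiv.Perm D)
    (hai : ∀ f, a (a f) = f) (haf : ∀ f, a f ≠ f)
    (hbi : ∀ f, b (b f) = f) (hbf : ∀ f, b f ≠ f) :
    ∀ (j k : ℕ) (x : D), (⇑(a*b))^[j] (a x) ≠ (⇑(a*b))^[k] x := by
  intro j k x h
  set c := a * b with hc
  set n := orderOf c with hn
  have hmul : ∀ (m : ℕ) (z : D), (⇑c)^[n * m] z = z := by
    intro m z
    rw [Function.iterate_mul]
    exact Function.iterate_fixed (iter_order c z) m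
  -- apply c^[n*j - j] to both sides
  have hj : (n*j - j) + j = n * j := by
    have : j ≤ n * j := Nat.le_mul_of_pos_left j (npos c)
    omega
  have h2 : (⇑c)^[n*j - j] ((⇑c)^[j] (a x)) = a x := by
    rw [← Function.iterate_add_apply, hj, hmul j (a x)]
  rw [h] at h2
  rw [← Function.iterate_add_apply] at h2
  exact claim1 a b hai haf hbi hbf _ x h2



private lemma inv_eq_self (a : Equiv.Perm D) (hai : ∀ f, a (a f) = f) : a⁻¹ = a := by
  ext z
  have : a (a z) = z := hai z
  exact (Equiv.Perm.eq_inv_iff_eq.mpr this).symm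

private lemma orbit_eq (a b : Equiv.Perm D)
    (hai : ∀ f, a (a f) = f) (hbi : ∀ f, b (b f) = f) (x : D) :
    MulAction.orbit (Subgroup.closure {a, b} : Subgroup (Equiv.Perm D)) x =
      {y | (∃ k : ℕ, (⇑(a*b))^[k] x = y) ∨ (∃ k : ℕ, (⇑(a*b))^[k] (a x) = y)} := by
  set c := a * b with hc
  set n := orderOf c with hn
  have ha : a ∈ Subgroup.closure ({a, b} : Set (Equiv.Perm D)) :=
    Subgroup.subset_closure (Set.mem_insert _ _)
  have hb : b ∈ Subgroup.closure ({a, b} : Set (Equiv.Perm D)) :=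
    Subgroup.subset_closure (Set.mem_insert_of_mem _ rfl)
  have hcmem : c ∈ Subgroup.closure ({a, b} : Set (Equiv.Perm D)) := mul_mem ha hb
  apply le_antisymm
  · rintro y ⟨g, rfl⟩
    have hg : (g : Equiv.Perm D) ∈ Subgroup.closure ({a, b} : Set (Equiv.Perm D)) := g.2
    rw [← Subgroup.mem_toSubmonoid, Subgroup.closure_toSubmonoid] at hg
    have hgen : ({a, b} : Set (Equiv.Perm D)) ∪ ({a, b} : Set (Equiv.Perm D))⁻¹
        = {a, b} := by
      rw [Set.union_eq_self_of_subset_right]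
      rintro z hz
      simp only [Set.mem_inv, Set.mem_insert_iff, Set.mem_singleton_iff] at hz ⊢
      rcases hz with h | h
      · left; rw [← inv_eq_self a hai, ← h, inv_inv]
      · right; rw [← inv_eq_self b hbi, ← h, inv_inv]
    rw [hgen] at hg
    -- motive: g maps the set U into itself
    set U : Set D := {y | (∃ k : ℕ, (⇑c)^[k] x = y) ∨ (∃ k : ℕ, (⇑c)^[k] (a x) = y)} with hU
    have hcU : ∀ z ∈ U, c z ∈ U := by
      rintro z (⟨k, rfl⟩ | ⟨k, rfl⟩)
      · exact Or.inl ⟨k+1, (Function.iterate_succ_apply' (⇑c) k x)⟩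
      · exact Or.inr ⟨k+1, (Function.iterate_succ_apply' (⇑c) k (a x))⟩
    have haU : ∀ z ∈ U, a z ∈ U := by
      rintro z (⟨k, rfl⟩ | ⟨k, rfl⟩)
      · exact Or.inr ⟨k * (n-1), (a_iter a b hai hbi k x).symm⟩
      · refine Or.inl ⟨k * (n-1), ?_⟩
        have := a_iter a b hai hbi k (a x)
        rw [hai x] at this
        exact this.symm
    have hbU : ∀ z ∈ U, b z ∈ U := by
      intro z hz
      have : b z = a (c z) := by
        show b z = a (a (b z)); rw [hai]
      rw [this]
      exact haU _ (hcU _ hz)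
    have main : ∀ w ∈ Submonoid.closure ({a, b} : Set (Equiv.Perm D)),
        ∀ z ∈ U, w z ∈ U := by
      intro w hw
      induction hw using Submonoid.closure_induction with
      | mem w hw =>
        rcases hw with h | h
        · subst h; exact haU
        · simp only [Set.mem_singleton_iff] at h; subst h; exact hbU
      | one => intro z hz; simpa using hz
      | mul u v hu hv ihu ihv =>
        intro z hz
        have : (u * v) z = u (v z) := rfl
        rw [this]; exact ihu _ (ihv _ hz)
    have hx : x ∈ U := Or.inl ⟨0, rfl⟩
    have := main _ hg x hx
    exact this
  · rintro y (⟨k, rfl⟩ | ⟨k, rfl⟩)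
    · refine ⟨⟨c^k, pow_mem hcmem k⟩, ?_⟩
      simp [Submonoid.smul_def, Equiv.Perm.smul_def, Equiv.Perm.coe_pow]
    · refine ⟨⟨c^k * a, mul_mem (pow_mem hcmem k) ha⟩, ?_⟩
      simp [Submonoid.smul_def, Equiv.Perm.smul_def, Equiv.Perm.coe_pow]



private lemma card_orbit (a b : Equiv.Perm D)
    (hai : ∀ f, a (a f) = f) (haf : ∀ f, a f ≠ f)
    (hbi : ∀ f, b (b f) = f) (hbf : ∀ f, b f ≠ f) (x : D) :
    Nat.card (MulAction.orbit (Subgroup.closure {a, b} : Subgroup (Equiv.Perm D)) x)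
      = 2 * Function.minimalPeriod ⇑(a*b) x := by
  classical
  set c := a * b with hc
  set n := orderOf c with hn
  set L := Function.minimalPeriod ⇑c x with hL
  have hper : Function.IsPeriodicPt (⇑c) n x := iter_order c x
  have hLpos : 0 < L := hper.minimalPeriod_pos (npos c)
  set C1 : Finset D := (Finset.range L).image (fun k => (⇑c)^[k] x) with hC1
  have hcard1 : C1.card = L := by
    rw [hC1, Finset.card_image_of_injOn, Finset.card_range]
    intro i hi j hj hij
    simp only [Finset.coe_range, Set.mem_Iio] at hi hj
    exact Function.iterate_injOn_Iio_minimalPeriod hi hj hij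
  have hmem1 : ∀ y, y ∈ C1 ↔ ∃ k : ℕ, (⇑c)^[k] x = y := by
    intro y
    simp only [hC1, Finset.mem_image, Finset.mem_range]
    constructor
    · rintro ⟨k, _, rfl⟩; exact ⟨k, rfl⟩
    · rintro ⟨k, rfl⟩
      exact ⟨k % L, Nat.mod_lt _ hLpos, Function.iterate_mod_minimalPeriod_eq⟩
  have hmem2 : ∀ y, y ∈ C1.image a ↔ ∃ k : ℕ, (⇑c)^[k] (a x) = y := by
    intro y
    simp only [Finset.mem_image]
    constructor
    · rintro ⟨z, hz, rfl⟩
      rw [hmem1] at hz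
      obtain ⟨k, rfl⟩ := hz
      exact ⟨k * (n - 1), (a_iter a b hai hbi k x).symm⟩
    · rintro ⟨k, rfl⟩
      refine ⟨(⇑c)^[k * (n-1)] x, (hmem1 _).mpr ⟨k * (n-1), rfl⟩, ?_⟩
      have := a_iter a b hai hbi k (a x)
      rw [hai x] at this
      rw [← this, hai]
  have hdisj : Disjoint C1 (C1.image a) := by
    rw [Finset.disjoint_left]
    intro y h1 h2
    obtain ⟨k, rfl⟩ := (hmem1 y).mp h1
    obtain ⟨j, hj⟩ := (hmem2 _).mp h2
    exact claim1' a b hai haf hbi hbf j k x hj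
  have horb : MulAction.orbit (Subgroup.closure {a, b} : Subgroup (Equiv.Perm D)) x
      = ↑(C1 ∪ C1.image a) := by
    rw [orbit_eq a b hai hbi x]
    ext y
    simp only [Finset.coe_union, Set.mem_union, Set.mem_setOf_eq, Finset.mem_coe, ← hc, hmem1, hmem2]
  rw [horb, Nat.card_coe_set_eq, Set.ncard_coe_finset,
    Finset.card_union_of_disjoint hdisj, hcard1,
    Finset.card_image_of_injective _ a.injective, hcard1]
  ring



private lemma main [Nonempty D] (a b : Equiv.Perm D)
    (hai : ∀ f, a (a f) = f) (haf : ∀ f, a f ≠ f)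
    (hbi : ∀ f, b (b f) = f) (hbf : ∀ f, b f ≠ f) :
    (∀ f : D, 4 ∣ Nat.card
        (MulAction.orbit (Subgroup.closure {a, b} : Subgroup (Equiv.Perm D)) f)) ↔
      (∃ o : D → Bool, (∀ f, o (a f) = !o f) ∧ (∀ f, o (b f) = o f)) := by
  classical
  set c := a * b with hc
  set n := orderOf c with hn
  constructor
  · -- forward: construct the colouring
    intro h4
    have hEven : ∀ y : D, 2 ∣ Function.minimalPeriod ⇑c y := by
      intro y
      have := h4 y
      rw [card_orbit a b hai haf hbi hbf y, ← hc] at this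
      omega
    have hnEven : 2 ∣ n := by
      obtain ⟨f0⟩ := ‹Nonempty D›
      have h1 : Function.minimalPeriod ⇑c f0 ∣ n :=
        Function.IsPeriodicPt.minimalPeriod_dvd (iter_order c f0)
      exact dvd_trans (hEven f0) h1
    have hn1odd : (n - 1) % 2 = 1 := by
      have := npos c
      omega
    have P1 : ∀ (y : D) (k k' : ℕ), (⇑c)^[k] y = (⇑c)^[k'] y → k % 2 = k' % 2 := by
      intro y k k' hkk
      set L := Function.minimalPeriod ⇑c y with hLdef
      have hLpos : 0 < L :=
        Function.IsPeriodicPt.minimalPeriod_pos (npos c) (iter_order c y)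
      have h1 : (⇑c)^[k % L] y = (⇑c)^[k' % L] y := by
        rw [Function.iterate_mod_minimalPeriod_eq, Function.iterate_mod_minimalPeriod_eq]
        exact hkk
      have h2 : k % L = k' % L :=
        Function.iterate_injOn_Iio_minimalPeriod (Nat.mod_lt _ hLpos) (Nat.mod_lt _ hLpos) h1
      have h3 : k % L % 2 = k % 2 := Nat.mod_mod_of_dvd k (hEven y)
      have h4' : k' % L % 2 = k' % 2 := Nat.mod_mod_of_dvd k' (hEven y)
      omega
    -- representatives of orbits
    set G : Subgroup (Equiv.Perm D) := Subgroup.closure {a, b} with hG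
    set s : Setoid D := MulAction.orbitRel G D with hs
    set r : D → D := fun x => (Quotient.mk s x).out with hr
    have hrel : ∀ x, r x ∈ MulAction.orbit G x := by
      intro x
      have h1 : Quotient.mk s (r x) = Quotient.mk s x := Quotient.out_eq _
      have h2 := Quotient.exact h1
      exact (MulAction.orbitRel_apply).mp h2
    have hmemx : ∀ x, x ∈ MulAction.orbit G (r x) := fun x =>
      MulAction.mem_orbit_symm.mpr (hrel x)
    have hrconst : ∀ (g : Equiv.Perm D), g ∈ G → ∀ x, r (g x) = r x := by
      intro g hg x
      have h1 : g x ∈ MulAction.orbit G x := ⟨⟨g, hg⟩, rfl⟩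
      have h2 : Quotient.mk s (g x) = Quotient.mk s x :=
        Quotient.sound ((MulAction.orbitRel_apply).mpr h1)
      simp only [hr, h2]
    have hamem : a ∈ G := Subgroup.subset_closure (Set.mem_insert _ _)
    have hbmem : b ∈ G := Subgroup.subset_closure (Set.mem_insert_of_mem _ rfl)
    have hcmem : c ∈ G := mul_mem hamem hbmem
    have hra : ∀ x, r (a x) = r x := hrconst a hamem
    have hrc : ∀ x, r (c x) = r x := hrconst c hcmem
    have hrb : ∀ x, r (b x) = r x := hrconst b hbmem
    -- the colouring
    set o : D → Bool := fun x =>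
      decide ((∃ k, k % 2 = 1 ∧ (⇑c)^[k] (r x) = x) ∨
              (∃ k, k % 2 = 0 ∧ (⇑c)^[k] (a (r x)) = x)) with ho
    -- evaluation lemmas
    have eval1 : ∀ (y : D) (k : ℕ), (⇑c)^[k] (r y) = y → o y = decide (k % 2 = 1) := by
      intro y k hk
      rw [ho]
      simp only [decide_eq_decide]
      constructor
      · rintro (⟨k', hk', hy⟩ | ⟨k', hk', hy⟩)
        · have := P1 (r y) k' k (hy.trans hk.symm)
          omega
        · exact absurd (hy.trans hk.symm) (claim1' a b hai haf hbi hbf k' k (r y))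
      · intro hodd
        exact Or.inl ⟨k, hodd, hk⟩
    have eval2 : ∀ (y : D) (k : ℕ), (⇑c)^[k] (a (r y)) = y → o y = decide (k % 2 = 0) := by
      intro y k hk
      rw [ho]
      simp only [decide_eq_decide]
      constructor
      · rintro (⟨k', hk', hy⟩ | ⟨k', hk', hy⟩)
        · exact absurd (hk.trans hy.symm) (claim1' a b hai haf hbi hbf k k' (r y))
        · have := P1 (a (r y)) k' k (hy.trans hk.symm)
          omega
      · intro heven
        exact Or.inr ⟨k, heven, hk⟩
    -- decomposition of any point
    have hdec : ∀ x : D, (∃ k : ℕ, (⇑c)^[k] (r x) = x) ∨ (∃ k : ℕ, (⇑c)^[k] (a (r x)) = x) := by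
      intro x
      have := hmemx x
      rw [orbit_eq a b hai hbi (r x)] at this
      exact this
    have hpar : ∀ k : ℕ, (k * (n-1)) % 2 = k % 2 := by
      intro k; rw [Nat.mul_mod, hn1odd, Nat.mul_one]; omega
    have hbx : ∀ z, b z = a (c z) := by
      intro z; show b z = a (a (b z)); rw [hai]
    have hBa : ∀ x, o (a x) = !o x := by
      intro x
      rcases hdec x with ⟨k, hk⟩ | ⟨k, hk⟩
      · have hax : (⇑c)^[k * (n-1)] (a (r (a x))) = a x := by
          rw [hra, ← a_iter a b hai hbi k (r x), hk]
        rw [eval1 x k hk, eval2 (a x) _ hax, hpar k]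
        rcases Nat.mod_two_eq_zero_or_one k with h | h <;> simp [h]
      · have hax : (⇑c)^[k * (n-1)] (r (a x)) = a x := by
          rw [hra]
          have h1 := a_iter a b hai hbi k (a (r x))
          rw [hai (r x)] at h1
          rw [← h1, hk]
        rw [eval2 x k hk, eval1 (a x) _ hax, hpar k]
        rcases Nat.mod_two_eq_zero_or_one k with h | h <;> simp [h]
    have hBb : ∀ x, o (b x) = o x := by
      intro x
      rcases hdec x with ⟨k, hk⟩ | ⟨k, hk⟩
      · have h1 : c x = (⇑c)^[k+1] (r x) := by
          rw [Function.iterate_succ_apply', hk]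
        have hax : (⇑c)^[(k+1) * (n-1)] (a (r (b x))) = b x := by
          rw [hrb, ← a_iter a b hai hbi (k+1) (r x), ← h1]
          exact (hbx x).symm
        rw [eval1 x k hk, eval2 (b x) _ hax, hpar (k+1)]
        rcases Nat.mod_two_eq_zero_or_one k with h | h <;> simp [Nat.add_mod, h]
      · have h1 : c x = (⇑c)^[k+1] (a (r x)) := by
          rw [Function.iterate_succ_apply', hk]
        have hax : (⇑c)^[(k+1) * (n-1)] (r (b x)) = b x := by
          rw [hrb]
          have h2 := a_iter a b hai hbi (k+1) (a (r x))
          rw [hai (r x)] at h2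
          rw [← h2, ← h1]
          exact (hbx x).symm
        rw [eval2 x k hk, eval1 (b x) _ hax, hpar (k+1)]
        rcases Nat.mod_two_eq_zero_or_one k with h | h <;> simp [Nat.add_mod, h]
    exact ⟨o, hBa, hBb⟩
  · -- reverse: colouring gives divisibility
    rintro ⟨o, hoa, hob⟩ f
    rw [card_orbit a b hai haf hbi hbf f, ← hc]
    suffices h : 2 ∣ Function.minimalPeriod ⇑c f by omega
    have hflip : ∀ z, o (c z) = !o z := by
      intro z
      have h1 : c z = a (b z) := rfl
      rw [h1, hoa, hob]
    have hiter : ∀ (m : ℕ) (z : D), o ((⇑c)^[2*m] z) = o z := by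
      intro m
      induction m with
      | zero => intro z; simp
      | succ m ih =>
        intro z
        have h1 : 2*(m+1) = 2*m + 2 := by ring
        rw [h1, Function.iterate_add_apply, ih]
        show o (c (c z)) = o z
        rw [hflip, hflip, Bool.not_not]
    rcases Nat.even_or_odd (Function.minimalPeriod ⇑c f) with he | ho
    · exact he.two_dvd
    · exfalso
      obtain ⟨m, hm⟩ := ho
      have h1 : (⇑c)^[Function.minimalPeriod ⇑c f] f = f := Function.iterate_minimalPeriod
      have h2 : o ((⇑c)^[2*m+1] f) = o (c f) := by
        rw [Function.iterate_succ_apply]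
        exact hiter m (c f)
      rw [← hm, h1, hflip] at h2
      simp at h2


end EulerPD

/-- **Theorem (Eulerian partial duals via crossing-total directions).**
Let `G = (D, τ0, τ1, τ2)` be a graph-encoded map, `A ⊆ D` closed under `τ0` and `τ2`,
and `σ2 = τ2^A` an involution of the partial dual `G^A`.  Then `G^A` is Eulerian
(every `⟨τ1, τ2^A⟩`-orbit has cardinality divisible by 4) iff there exists
`o : D → Bool` with `o (τ1 f) = ¬ o f` for all `f`, `o (τ0 f) = o f` on `A` and
`o (τ2 f) = o f` off `A` — i.e. iff `A` is the union of the set of all `d`-edges and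
a set of some `t`-edges arising from a crossing-total direction of `G_m`. -/
theorem eulerian_partialDual_iff_crossingTotal
    {D : Type*} [Fintype D] [Nonempty D]
    (τ0 τ1 τ2 : Equiv.Perm D)
    (h0i : ∀ f, τ0 (τ0 f) = f) (h0f : ∀ f, τ0 f ≠ f)
    (h1i : ∀ f, τ1 (τ1 f) = f) (h1f : ∀ f, τ1 f ≠ f)
    (h2i : ∀ f, τ2 (τ2 f) = f) (h2f : ∀ f, τ2 f ≠ f)
    (hcomm : ∀ f, τ0 (τ2 f) = τ2 (τ0 f))
    (h02f : ∀ f, τ0 (τ2 f) ≠ f)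
    (A : Set D) (hA0 : ∀ f ∈ A, τ0 f ∈ A) (hA2 : ∀ f ∈ A, τ2 f ∈ A)
    -- σ2 is τ2^A : agrees with τ0 on A and with τ2 on D \ A
    (σ2 : Equiv.Perm D)
    (hσ2in : ∀ f ∈ A, σ2 f = τ0 f) (hσ2out : ∀ f ∉ A, σ2 f = τ2 f) :
    (∀ f : D, 4 ∣ Nat.card
        (MulAction.orbit (Subgroup.closure {τ1, σ2} : Subgroup (Equiv.Perm D)) f)) ↔
    (∃ o : D → Bool,
      (∀ f : D, o (τ1 f) = !o f) ∧
      (∀ f ∈ A, o (τ0 f) = o f) ∧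
      (∀ f ∉ A, o (τ2 f) = o f)) := by
  have hbi : ∀ f, σ2 (σ2 f) = f := by
    intro f
    by_cases hf : f ∈ A
    · rw [hσ2in f hf, hσ2in _ (hA0 f hf), h0i]
    · have h2 : τ2 f ∉ A := by
        intro h
        exact hf (by rw [← h2i f]; exact hA2 _ h)
      rw [hσ2out f hf, hσ2out _ h2, h2i]
  have hbf : ∀ f, σ2 f ≠ f := by
    intro f
    by_cases hf : f ∈ A
    · rw [hσ2in f hf]; exact h0f f
    · rw [hσ2out f hf]; exact h2f f
  rw [EulerPD.main τ1 σ2 h1i h1f hbi hbf]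
  constructor
  · rintro ⟨o, hoa, hob⟩
    refine ⟨o, hoa, ?_, ?_⟩
    · intro f hf; rw [← hσ2in f hf]; exact hob f
    · intro f hf; rw [← hσ2out f hf]; exact hob f
  · rintro ⟨o, hoa, hin, hout⟩
    refine ⟨o, hoa, ?_⟩
    intro f
    by_cases hf : f ∈ A
    · rw [hσ2in f hf]; exact hin f hf
    · rw [hσ2out f hf]; exact hout f hf
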